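/- Let {t_n}_{n=0}^∞ be a Stieltjes moment sequence and let ϑ be a positive real number; set t_{-1} = ϑ. Then the following are equivalent: (i) {t_{n-1}}_{n=0}^∞ is a Stieltjes moment sequence; (ii) {t_{n-1}}_{n=0}^∞ is positive definite; (iii) there exists a representing measure μ of {t_n}_{n=0}^∞ such that ∫_{[0,∞)} (1/s) dμ(s) ≤ ϑ (with the convention 1/0 = ∞, so that this inequality forces μ({0}) = 0). -/

import Mathlib

open MeasureTheory ENNReal
open scoped NNReal
noncomputable section

/-- `μ` is a representing measure of the sequence `t`. -/
def IsRepMeasure (μ : Measure ℝ≥0) (t : ℕ → ℝ) : Prop :=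
  ∀ n : ℕ, Integrable (fun s : ℝ≥0 => (s : ℝ) ^ n) μ ∧ t n = ∫ s, (s : ℝ) ^ n ∂μ

/-- `t` is a Stieltjes moment sequence. -/
def IsStieltjesMoment (t : ℕ → ℝ) : Prop := ∃ μ : Measure ℝ≥0, IsRepMeasure μ t

/-- `t` is a determinate Stieltjes moment sequence. -/
def IsDetStieltjesMoment (t : ℕ → ℝ) : Prop := ∃! μ : Measure ℝ≥0, IsRepMeasure μ t

section Operators

universe u
variable {H : Type u} [NormedAddCommGroup H] [InnerProductSpace ℂ H]

/-- The maximal domain of the composition `S ∘ T`. -/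
def compDomain (S T : H →ₗ.[ℂ] H) : Submodule ℂ H where
  carrier := {x | ∃ hx : x ∈ T.domain, T ⟨x, hx⟩ ∈ S.domain}
  zero_mem' := ⟨T.domain.zero_mem, by
    have h0 : (⟨0, T.domain.zero_mem⟩ : T.domain) = 0 := rfl
    rw [h0, LinearPMap.map_zero]; exact S.domain.zero_mem⟩
  add_mem' := by
    rintro x y ⟨hx, hx'⟩ ⟨hy, hy'⟩
    refine ⟨T.domain.add_mem hx hy, ?_⟩
    have : (⟨x + y, T.domain.add_mem hx hy⟩ : T.domain) = ⟨x, hx⟩ + ⟨y, hy⟩ := rfl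
    rw [this, LinearPMap.map_add]
    exact S.domain.add_mem hx' hy'
  smul_mem' := by
    rintro c x ⟨hx, hx'⟩
    refine ⟨T.domain.smul_mem c hx, ?_⟩
    have : (⟨c • x, T.domain.smul_mem c hx⟩ : T.domain) = c • (⟨x, hx⟩ : T.domain) := rfl
    rw [this, LinearPMap.map_smul]
    exact S.domain.smul_mem c hx'

/-- Composition `S ∘ T` of partial operators, on the maximal domain. -/
def pmapComp (S T : H →ₗ.[ℂ] H) : H →ₗ.[ℂ] H :=
  S.comp (T.domRestrict (compDomain S T)) (by
    rintro ⟨x, hx⟩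
    have hxT : x ∈ T.domain := (Submodule.mem_inf.mp hx).2
    have hxD : x ∈ compDomain S T := (Submodule.mem_inf.mp hx).1
    refine (congrArg (fun z => z ∈ S.domain) (LinearPMap.domRestrict_apply
      (show ((⟨x, hx⟩ : ↥(compDomain S T ⊓ T.domain)) : H)
      = ((⟨x, hxT⟩ : T.domain) : H) from rfl))).mpr ?_
    exact hxD.choose_spec)

/-- Powers of a partial operator: `pmapPow S n = Sⁿ` with its natural domain. -/
def pmapPow (S : H →ₗ.[ℂ] H) : ℕ → (H →ₗ.[ℂ] H)
  | 0 => LinearMap.id.toPMap ⊤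
  | n + 1 => pmapComp (pmapPow S n) S

open Classical in
/-- Total (junk-valued) application of the power `Sⁿ`. -/
def powApp (S : H →ₗ.[ℂ] H) (n : ℕ) (x : H) : H :=
  if h : x ∈ (pmapPow S n).domain then (pmapPow S n) ⟨x, h⟩ else 0

/-- The set of `C^∞`-vectors of `S`. -/
def Dinf (S : H →ₗ.[ℂ] H) : Set H := {x | ∀ n : ℕ, x ∈ (pmapPow S n).domain}

/-- `F` is a core of `S`. -/
def IsCore (S : H →ₗ.[ℂ] H) (F : Submodule ℂ H) : Prop :=
  F ≤ S.domain ∧ (S.graph : Set (H × H)) ⊆ closure ((S.domRestrict F).graph : Set (H × H))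

end Operators
section Operators
universe u
variable {H : Type u} [NormedAddCommGroup H] [InnerProductSpace ℂ H]

/-- A normal (unbounded) operator: closed, densely defined, with `D(N*) = D(N)` and
`‖N* x‖ = ‖N x‖` on the common domain. -/
def IsNormalOp [CompleteSpace H] (N : H →ₗ.[ℂ] H) : Prop :=
  Dense (N.domain : Set H) ∧ N.IsClosed ∧ N.adjoint.domain = N.domain ∧
    ∀ (x : H) (hx : x ∈ N.domain) (hx' : x ∈ N.adjoint.domain),
      ‖N.adjoint ⟨x, hx'⟩‖ = ‖N ⟨x, hx⟩‖

/-- A subnormal operator: densely defined with a normal extension in a possibly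
larger Hilbert space. -/
def IsSubnormal {H : Type u} [NormedAddCommGroup H] [InnerProductSpace ℂ H]
    (S : H →ₗ.[ℂ] H) : Prop :=
  Dense (S.domain : Set H) ∧
  ∃ (K : Type u) (_ : NormedAddCommGroup K) (_ : InnerProductSpace ℂ K) (_ : CompleteSpace K)
    (J : H →ₗᵢ[ℂ] K) (N : K →ₗ.[ℂ] K), IsNormalOp N ∧
      ∀ x : S.domain, ∃ hx : J x ∈ N.domain, N ⟨J x, hx⟩ = J (S x)

/-- A hyponormal operator. -/
def IsHyponormal [CompleteSpace H] (S : H →ₗ.[ℂ] H) : Prop :=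
  Dense (S.domain : Set H) ∧
  ∀ (x : H) (hx : x ∈ S.domain), ∃ hx' : x ∈ S.adjoint.domain,
      ‖S.adjoint ⟨x, hx'⟩‖ ≤ ‖S ⟨x, hx⟩‖

end Operators

/-- A directed tree on the vertex set `V`: a connected directed graph without circuits
in which every non-root vertex has a unique parent. -/
structure DirectedTree (V : Type*) where
  edge : V → V → Prop
  connected : ∀ u v : V, Relation.ReflTransGen (fun a b => edge a b ∨ edge b a) u v
  no_circuits : ∀ v : V, ¬ Relation.TransGen edge v v
  parent_unique : ∀ u v w : V, edge v u → edge w u → v = w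

namespace DirectedTree

variable {V : Type*}

/-- The roots: vertices with no incoming edge. -/
def isRoot (T : DirectedTree V) (v : V) : Prop := ¬ ∃ u : V, T.edge u v

/-- `V°`: the non-root vertices, i.e. vertices having a parent. -/
def nonRoot (T : DirectedTree V) (v : V) : Prop := ∃ u : V, T.edge u v

open Classical in
/-- The parent function (with junk value at roots). -/
def par (T : DirectedTree V) (v : V) : V := if h : ∃ u : V, T.edge u v then h.choose else v

/-- The set of children of a vertex. -/
def chi (T : DirectedTree V) (u : V) : Set V := {v | T.edge u v}

/-- Iterated children `Chi^n(u)`. -/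
def chiN (T : DirectedTree V) : ℕ → V → Set V
  | 0, u => {u}
  | n + 1, u => ⋃ w ∈ T.chiN n u, T.chi w

/-- The descendants of `u`. -/
def des (T : DirectedTree V) (u : V) : Set V := ⋃ n : ℕ, T.chiN n u

/-- `T` is leafless: every vertex has a child. -/
def Leafless (T : DirectedTree V) : Prop := ∀ u : V, ∃ v : V, T.edge u v

/-- The product `λ_{u∣v} = ∏_{j=0}^{n-1} λ_{par^j(v)}` of the weights along the path of
length `n` ending at `v` (for `v ∈ Chi^n(u)` this is the usual `λ_{u∣v}`). -/
def pathProd (T : DirectedTree V) (lam : V → ℂ) (n : ℕ) (v : V) : ℂ :=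
  ∏ j ∈ Finset.range n, lam (T.par^[j] v)

open Classical in
/-- The formal weighted-shift transformation `Λ_T` on families of complex numbers. -/
def lamMap (T : DirectedTree V) (lam : V → ℂ) (f : V → ℂ) : V → ℂ :=
  fun v => if T.nonRoot v then lam v * f (T.par v) else 0

variable (T : DirectedTree V)

theorem lamMap_add (lam : V → ℂ) (f g : V → ℂ) :
    T.lamMap lam (f + g) = T.lamMap lam f + T.lamMap lam g := by
  funext v; simp only [lamMap, Pi.add_apply]; split <;> ring

theorem lamMap_smul (lam : V → ℂ) (c : ℂ) (f : V → ℂ) :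
    T.lamMap lam (c • f) = c • T.lamMap lam f := by
  funext v; simp only [lamMap, Pi.smul_apply, smul_eq_mul]; split <;> ring

theorem lamMap_zero (lam : V → ℂ) : T.lamMap lam (0 : V → ℂ) = 0 := by
  funext v; simp [lamMap]

/-- The domain of the weighted shift `S_λ`. -/
def shiftDomain (lam : V → ℂ) : Submodule ℂ (lp (fun _ : V => ℂ) 2) where
  carrier := {f | Memℓp (T.lamMap lam f) 2}
  zero_mem' := by
    rw [Set.mem_setOf_eq, lp.coeFn_zero, lamMap_zero]
    exact zero_memℓp
  add_mem' := by
    intro f g hf hg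
    rw [Set.mem_setOf_eq, lp.coeFn_add, lamMap_add]
    exact hf.add hg
  smul_mem' := by
    intro c f hf
    rw [Set.mem_setOf_eq, lp.coeFn_smul, lamMap_smul]
    exact hf.const_smul c

/-- The weighted shift `S_λ` on the directed tree `T`, as a partial operator in `ℓ²(V)`. -/
def shift (lam : V → ℂ) : lp (fun _ : V => ℂ) 2 →ₗ.[ℂ] lp (fun _ : V => ℂ) 2 where
  domain := T.shiftDomain lam
  toFun :=
    { toFun := fun f => (⟨T.lamMap lam f, f.2⟩ : lp (fun _ : V => ℂ) 2)
      map_add' := by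
        rintro f g
        apply lp.ext
        rw [lp.coeFn_add]
        show T.lamMap lam
            ((((f : lp (fun _ : V => ℂ) 2) : V → ℂ)) + (((g : lp (fun _ : V => ℂ) 2) : V → ℂ)))
          = T.lamMap lam ((f : lp (fun _ : V => ℂ) 2) : V → ℂ)
            + T.lamMap lam ((g : lp (fun _ : V => ℂ) 2) : V → ℂ)
        exact T.lamMap_add lam _ _
      map_smul' := by
        rintro c f
        apply lp.ext
        rw [lp.coeFn_smul]
        show T.lamMap lam (c • (((f : lp (fun _ : V => ℂ) 2) : V → ℂ)))
          = c • T.lamMap lam ((f : lp (fun _ : V => ℂ) 2) : V → ℂ)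
        exact T.lamMap_smul lam c _ }

end DirectedTree

open Classical in
/-- The basis vector `e_u` of `ℓ²(V)`. -/
def eVec {V : Type*} (u : V) : lp (fun _ : V => ℂ) 2 := lp.single 2 u 1

section MoreDefs
universe u
variable {H : Type u} [NormedAddCommGroup H] [InnerProductSpace ℂ H]

/-- The inner product, linear in the FIRST argument (the paper's convention). -/
def innerPaper (x y : H) : ℂ := inner ℂ y x

/-- The moment sequence `n ↦ ‖Sⁿ f‖²` generated by the vector `f`. -/
def momentSeq (S : H →ₗ.[ℂ] H) (f : H) : ℕ → ℝ := fun n => ‖powApp S n f‖ ^ 2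

/-- `f` is a quasi-analytic vector of `S` : `f ∈ D^∞(S)` and
`∑ₙ ‖Sⁿ f‖^{-1/n} = ∞` (with `1/0 = ∞`). -/
def IsQuasiAnalyticVec (S : H →ₗ.[ℂ] H) (f : H) : Prop :=
  (∀ n : ℕ, f ∈ (pmapPow S n).domain) ∧
  ∑' n : ℕ, ((‖powApp S (n + 1) f‖₊ ^ ((1 : ℝ) / (n + 1)) : ℝ≥0) : ℝ≥0∞)⁻¹ = ∞

end MoreDefs

/-- The consistency condition `μ_u(σ) = ∑_{v ∈ Chi(u)} |λ_v|² ∫_σ (1/s) dμ_v(s) + ε_u δ₀(σ)`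
at the vertex `u` (with the convention `1/0 = ∞`). -/
def consistentAt {V : Type*} (T : DirectedTree V) (lam : V → ℂ) (μ : V → MeasureTheory.Measure ℝ≥0)
    (ε : V → ℝ≥0) (u : V) : Prop :=
  ∀ σ : Set ℝ≥0, MeasurableSet σ →
    μ u σ = (∑' v : {v : V // T.edge u v},
        (‖lam (v : V)‖₊ : ℝ≥0∞) ^ 2 * ∫⁻ s in σ, ((s : ℝ≥0∞))⁻¹ ∂(μ (v : V)))
      + (ε u : ℝ≥0∞) * MeasureTheory.Measure.dirac (0 : ℝ≥0) σ

/-- The sequence `{ϑ, t₀, t₁, t₂, …}` obtained by prepending `ϑ` to `t`. -/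
def shiftedSeq (ϑ : ℝ) (t : ℕ → ℝ) : ℕ → ℝ := fun n => match n with
  | 0 => ϑ
  | n + 1 => t n

/-- A positive definite sequence of real numbers. -/
def IsPosDefSeq (t : ℕ → ℝ) : Prop :=
  ∀ (n : ℕ) (α : ℕ → ℂ),
    0 ≤ (∑ k ∈ Finset.range (n + 1), ∑ l ∈ Finset.range (n + 1),
        (t (k + l) : ℂ) * α k * (starRingEnd ℂ) (α l)).re ∧
    (∑ k ∈ Finset.range (n + 1), ∑ l ∈ Finset.range (n + 1),
        (t (k + l) : ℂ) * α k * (starRingEnd ℂ) (α l)).im = 0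


/-- Real quadratic-form positivity extracted from `IsPosDefSeq`-style complex positivity. -/
theorem IsPosDefSeqReal_of {u : ℕ → ℝ}
    (h : ∀ (n : ℕ) (α : ℕ → ℂ),
      0 ≤ (∑ k ∈ Finset.range (n + 1), ∑ l ∈ Finset.range (n + 1),
          (u (k + l) : ℂ) * α k * (starRingEnd ℂ) (α l)).re ∧
      (∑ k ∈ Finset.range (n + 1), ∑ l ∈ Finset.range (n + 1),
          (u (k + l) : ℂ) * α k * (starRingEnd ℂ) (α l)).im = 0)
    (n : ℕ) (c : ℕ → ℝ) :
    0 ≤ ∑ k ∈ Finset.range (n + 1), ∑ l ∈ Finset.range (n + 1), u (k + l) * c k * c l := by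
  have h1 := (h n (fun k => (c k : ℂ))).1
  have : (∑ k ∈ Finset.range (n + 1), ∑ l ∈ Finset.range (n + 1),
      (u (k + l) : ℂ) * (c k : ℂ) * (starRingEnd ℂ) ((c l : ℂ))).re
      = ∑ k ∈ Finset.range (n + 1), ∑ l ∈ Finset.range (n + 1), u (k + l) * c k * c l := by
    rw [Complex.re_sum]
    refine Finset.sum_congr rfl fun k _ => ?_
    rw [Complex.re_sum]
    refine Finset.sum_congr rfl fun l _ => ?_
    simp [Complex.conj_ofReal]
    try norm_cast
  rw [this] at h1
  exact h1

/-- Positive definiteness from real quadratic-form positivity. -/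
theorem isPosDefSeq_of_real {u : ℕ → ℝ}
    (h : ∀ (n : ℕ) (c : ℕ → ℝ),
      0 ≤ ∑ k ∈ Finset.range (n + 1), ∑ l ∈ Finset.range (n + 1), u (k + l) * c k * c l) :
    IsPosDefSeq u := by
  intro n α
  have hre : (∑ k ∈ Finset.range (n + 1), ∑ l ∈ Finset.range (n + 1),
      (u (k + l) : ℂ) * α k * (starRingEnd ℂ) (α l)).re
      = (∑ k ∈ Finset.range (n + 1), ∑ l ∈ Finset.range (n + 1),
          u (k + l) * (α k).re * (α l).re)
        + ∑ k ∈ Finset.range (n + 1), ∑ l ∈ Finset.range (n + 1),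
          u (k + l) * (α k).im * (α l).im := by
    rw [Complex.re_sum, ← Finset.sum_add_distrib]
    refine Finset.sum_congr rfl fun k _ => ?_
    rw [Complex.re_sum, ← Finset.sum_add_distrib]
    refine Finset.sum_congr rfl fun l _ => ?_
    simp [Complex.mul_re, Complex.mul_im]
    try ring
  have him : (∑ k ∈ Finset.range (n + 1), ∑ l ∈ Finset.range (n + 1),
      (u (k + l) : ℂ) * α k * (starRingEnd ℂ) (α l)).im = 0 := by
    have expand : (∑ k ∈ Finset.range (n + 1), ∑ l ∈ Finset.range (n + 1),
        (u (k + l) : ℂ) * α k * (starRingEnd ℂ) (α l)).im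
        = ∑ k ∈ Finset.range (n + 1), ∑ l ∈ Finset.range (n + 1),
          ((u (k + l) : ℂ) * α k * (starRingEnd ℂ) (α l)).im := by
      rw [Complex.im_sum]
      exact Finset.sum_congr rfl fun k _ => Complex.im_sum _ _
    rw [expand]
    have : ∀ k l, ((u (k + l) : ℂ) * α k * (starRingEnd ℂ) (α l)).im
        = u (k + l) * ((α k).im * (α l).re - (α k).re * (α l).im) := by
      intro k l
      simp [Complex.mul_re, Complex.mul_im]
      try ring
    calc (∑ k ∈ Finset.range (n + 1), ∑ l ∈ Finset.range (n + 1),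
          ((u (k + l) : ℂ) * α k * (starRingEnd ℂ) (α l)).im)
        = ∑ k ∈ Finset.range (n + 1), ∑ l ∈ Finset.range (n + 1),
            u (k + l) * ((α k).im * (α l).re - (α k).re * (α l).im) := by
          refine Finset.sum_congr rfl fun k _ => Finset.sum_congr rfl fun l _ => this k l
      _ = 0 := by
          have := Finset.sum_comm (s := Finset.range (n+1)) (t := Finset.range (n+1))
            (f := fun k l => u (k + l) * ((α k).im * (α l).re - (α k).re * (α l).im))
          have h2 : ∑ k ∈ Finset.range (n + 1), ∑ l ∈ Finset.range (n + 1),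
              u (k + l) * ((α k).im * (α l).re - (α k).re * (α l).im)
              = - ∑ k ∈ Finset.range (n + 1), ∑ l ∈ Finset.range (n + 1),
                u (k + l) * ((α k).im * (α l).re - (α k).re * (α l).im) := by
            nth_rewrite 1 [this]
            rw [← Finset.sum_neg_distrib]
            refine Finset.sum_congr rfl fun l _ => ?_
            rw [← Finset.sum_neg_distrib]
            refine Finset.sum_congr rfl fun k _ => ?_
            rw [Nat.add_comm l k]
            ring
          linarith
  refine ⟨?_, him⟩
  rw [hre]
  exact add_nonneg (h n fun k => (α k).re) (h n fun k => (α k).im)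


section Chunk2

/-- The quadratic form with offset `m` of a represented sequence is nonnegative. -/
theorem rep_form_nonneg {t : ℕ → ℝ} {μ : MeasureTheory.Measure ℝ≥0} (hμ : IsRepMeasure μ t)
    (m n : ℕ) (c : ℕ → ℝ) :
    0 ≤ ∑ k ∈ Finset.range (n + 1), ∑ l ∈ Finset.range (n + 1), t (k + l + m) * c k * c l := by
  have hint : ∀ k l : ℕ, Integrable (fun s : ℝ≥0 => c k * c l * (s : ℝ) ^ (k + l + m)) μ :=
    fun k l => ((hμ (k + l + m)).1.const_mul _)
  have : ∑ k ∈ Finset.range (n + 1), ∑ l ∈ Finset.range (n + 1), t (k + l + m) * c k * c l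
      = ∫ s : ℝ≥0, (∑ k ∈ Finset.range (n + 1), c k * (s : ℝ) ^ k)
          * (∑ l ∈ Finset.range (n + 1), c l * (s : ℝ) ^ l) * (s : ℝ) ^ m ∂μ := by
    have : ∀ s : ℝ≥0, (∑ k ∈ Finset.range (n + 1), c k * (s : ℝ) ^ k)
          * (∑ l ∈ Finset.range (n + 1), c l * (s : ℝ) ^ l) * (s : ℝ) ^ m
        = ∑ k ∈ Finset.range (n + 1), ∑ l ∈ Finset.range (n + 1),
            c k * c l * (s : ℝ) ^ (k + l + m) := by
      intro s
      rw [Finset.sum_mul_sum, Finset.sum_mul]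
      refine Finset.sum_congr rfl fun k _ => ?_
      rw [Finset.sum_mul]
      refine Finset.sum_congr rfl fun l _ => ?_
      rw [pow_add, pow_add]
      ring
    rw [MeasureTheory.integral_congr_ae (Filter.Eventually.of_forall this)]
    rw [MeasureTheory.integral_finset_sum _ (fun k _ => by
      exact MeasureTheory.integrable_finset_sum _ (fun l _ => hint k l))]
    refine Finset.sum_congr rfl fun k _ => ?_
    rw [MeasureTheory.integral_finset_sum _ (fun l _ => hint k l)]
    refine Finset.sum_congr rfl fun l _ => ?_
    rw [MeasureTheory.integral_const_mul, ← (hμ (k + l + m)).2]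
    ring
  rw [this]
  refine MeasureTheory.integral_nonneg fun s => ?_
  have h1 : (0:ℝ) ≤ (∑ k ∈ Finset.range (n + 1), c k * (s : ℝ) ^ k)
      * (∑ l ∈ Finset.range (n + 1), c l * (s : ℝ) ^ l) := mul_self_nonneg _
  positivity

theorem stieltjes_posdef {t : ℕ → ℝ} (ht : IsStieltjesMoment t) : IsPosDefSeq t := by
  obtain ⟨μ, hμ⟩ := ht
  exact isPosDefSeq_of_real fun n c => by
    simpa using rep_form_nonneg hμ 0 n c

end Chunk2
section Chunk3

open MeasureTheory

/-- A representing measure is finite, with total mass `ofReal (t 0)`. -/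
theorem rep_measure_univ {t : ℕ → ℝ} {μ : Measure ℝ≥0} (hμ : IsRepMeasure μ t) :
    μ Set.univ = ENNReal.ofReal (t 0) := by
  have h0 := hμ 0
  simp only [pow_zero] at h0
  have hfin : μ Set.univ < ⊤ := by
    have := h0.1
    rw [integrable_const_iff] at this
    rcases this with h | h
    · exact absurd h one_ne_zero
    · exact @measure_lt_top _ _ μ h _
  have : t 0 = (μ Set.univ).toReal := by
    rw [h0.2, integral_const, smul_eq_mul, mul_one]
    rfl
  rw [this, ENNReal.ofReal_toReal hfin.ne]

theorem smul_pow_eq {n : ℕ} :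
    (fun s : ℝ≥0 => (fun s : ℝ≥0 => s) s • (s : ℝ) ^ n) = fun s : ℝ≥0 => (s : ℝ) ^ (n + 1) := by
  funext s
  rw [NNReal.smul_def, smul_eq_mul, pow_succ]
  ring

/-- (i) ⇒ (iii). -/
theorem shifted_to_bound {t : ℕ → ℝ} {ϑ : ℝ}
    (h : IsStieltjesMoment (shiftedSeq ϑ t)) :
    ∃ μ : MeasureTheory.Measure ℝ≥0, IsRepMeasure μ t ∧
      (∫⁻ s, ((s : ℝ≥0∞))⁻¹ ∂μ) ≤ ENNReal.ofReal ϑ := by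
  obtain ⟨ν, hν⟩ := h
  have hmeas : Measurable (fun s : ℝ≥0 => s) := measurable_id
  refine ⟨ν.withDensity (fun s : ℝ≥0 => (s : ℝ≥0∞)), ?_, ?_⟩
  · intro n
    constructor
    · have key := (MeasureTheory.integrable_withDensity_iff_integrable_smul (μ := ν) hmeas
        (g := fun s : ℝ≥0 => (s : ℝ) ^ n)).mpr
      rw [smul_pow_eq] at key
      exact key (hν (n + 1)).1
    · have key := integral_withDensity_eq_integral_smul (μ := ν) hmeas
        (fun s : ℝ≥0 => (s : ℝ) ^ n)
      rw [smul_pow_eq] at key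
      rw [key, ← (hν (n + 1)).2]
      rfl
  · rw [MeasureTheory.lintegral_withDensity_eq_lintegral_mul _
      (by exact measurable_coe_nnreal_ennreal) (by exact (measurable_coe_nnreal_ennreal).inv)]
    calc ∫⁻ s : ℝ≥0, ((s : ℝ≥0∞) * ((s : ℝ≥0∞))⁻¹) ∂ν
        ≤ ∫⁻ _ : ℝ≥0, 1 ∂ν := by
          refine MeasureTheory.lintegral_mono fun s => ?_
          exact ENNReal.mul_inv_le_one _
      _ = ν Set.univ := MeasureTheory.lintegral_one
      _ = ENNReal.ofReal ϑ := rep_measure_univ hν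

end Chunk3
section Chunk4

open MeasureTheory

theorem integrable_smul_dirac {c : ℝ≥0∞} (hc : c ≠ ⊤) (f : ℝ≥0 → ℝ)
    (hf : StronglyMeasurable f) : Integrable f (c • Measure.dirac (0 : ℝ≥0)) := by
  refine ⟨hf.aestronglyMeasurable, ?_⟩
  rw [HasFiniteIntegral, lintegral_smul_measure,
    lintegral_dirac' _ hf.measurable.enorm]
  exact ENNReal.mul_lt_top hc.lt_top enorm_lt_top

theorem integral_smul_dirac {c : ℝ≥0∞} (f : ℝ≥0 → ℝ) :
    ∫ s, f s ∂(c • Measure.dirac (0 : ℝ≥0)) = c.toReal * f 0 := by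
  rw [integral_smul_measure, integral_dirac, smul_eq_mul]

/-- (iii) ⇒ (i). -/
theorem bound_to_shifted {t : ℕ → ℝ} {ϑ : ℝ} (hϑ : 0 < ϑ)
    (h : ∃ μ : Measure ℝ≥0, IsRepMeasure μ t ∧
      (∫⁻ s, ((s : ℝ≥0∞))⁻¹ ∂μ) ≤ ENNReal.ofReal ϑ) :
    IsStieltjesMoment (shiftedSeq ϑ t) := by
  obtain ⟨μ, hμ, hb⟩ := h
  set I : ℝ≥0∞ := ∫⁻ s, ((s : ℝ≥0∞))⁻¹ ∂μ with hI
  have hItop : I ≠ ⊤ := (lt_of_le_of_lt hb ENNReal.ofReal_lt_top).ne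
  have h0 : μ {0} = 0 := by
    by_contra h0
    have : (⊤ : ℝ≥0∞) * μ {0} ≤ I := by
      calc (⊤ : ℝ≥0∞) * μ {0} = ∫⁻ s in {0}, ((s : ℝ≥0∞))⁻¹ ∂μ := by
            rw [setLIntegral_congr_fun (measurableSet_singleton 0)
              (f := fun s : ℝ≥0 => ((s : ℝ≥0∞))⁻¹) (g := fun _ => ⊤)
              (fun s hs => by simp [Set.mem_singleton_iff.mp hs])]
            simp [lintegral_const]
        _ ≤ I := setLIntegral_le_lintegral _ _
    rw [ENNReal.top_mul h0] at this
    exact hItop (top_le_iff.mp this)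
  have hg : Measurable (fun s : ℝ≥0 => s⁻¹) := measurable_inv
  have hae : ∀ᵐ s : ℝ≥0 ∂μ, s ≠ 0 := by
    rw [MeasureTheory.ae_iff]
    simpa using h0
  have hcoe : ∀ᵐ s : ℝ≥0 ∂μ, ((s⁻¹ : ℝ≥0) : ℝ≥0∞) = ((s : ℝ≥0∞))⁻¹ := by
    filter_upwards [hae] with s hs
    rw [ENNReal.coe_inv hs]
  have hIalt : (∫⁻ s : ℝ≥0, ((s⁻¹ : ℝ≥0) : ℝ≥0∞) ∂μ) = I := lintegral_congr_ae hcoe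
  set c : ℝ≥0∞ := ENNReal.ofReal ϑ - I with hc
  have hctop : c ≠ ⊤ :=
    ne_top_of_le_ne_top (ENNReal.ofReal_ne_top (r := ϑ)) tsub_le_self
  set wd : Measure ℝ≥0 := μ.withDensity (fun s : ℝ≥0 => ((s⁻¹ : ℝ≥0) : ℝ≥0∞)) with hwd
  have hwduniv : wd Set.univ = I := by
    rw [hwd, withDensity_apply _ MeasurableSet.univ, Measure.restrict_univ, hIalt]
  have hwdfin : IsFiniteMeasure wd := ⟨by rw [hwduniv]; exact hItop.lt_top⟩
  refine ⟨wd + c • Measure.dirac 0, fun n => ?_⟩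
  have hsm : StronglyMeasurable (fun s : ℝ≥0 => (s : ℝ) ^ n) :=
    (continuous_pow n).comp NNReal.continuous_coe |>.stronglyMeasurable
  have hint_dirac : Integrable (fun s : ℝ≥0 => (s : ℝ) ^ n) (c • Measure.dirac 0) :=
    integrable_smul_dirac hctop _ hsm
  have hint_wd : Integrable (fun s : ℝ≥0 => (s : ℝ) ^ n) wd := by
    rcases n with _ | m
    · simp only [pow_zero]
      exact integrable_const 1
    · rw [hwd, MeasureTheory.integrable_withDensity_iff_integrable_smul hg]
      have hsmulae : (fun s : ℝ≥0 => (fun s : ℝ≥0 => s⁻¹) s • (s : ℝ) ^ (m + 1))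
          =ᵐ[μ] (fun s : ℝ≥0 => (s : ℝ) ^ m) := by
        filter_upwards [hae] with s hs
        simp only [NNReal.smul_def, smul_eq_mul]
        rw [NNReal.coe_inv, pow_succ]
        field_simp
      exact Integrable.congr (hμ m).1 hsmulae.symm
  refine ⟨Integrable.add_measure hint_wd hint_dirac, ?_⟩
  rw [integral_add_measure hint_wd hint_dirac, integral_smul_dirac]
  rcases n with _ | m
  · simp only [pow_zero, mul_one]
    rw [MeasureTheory.integral_const, smul_eq_mul, mul_one]
    show ϑ = (wd Set.univ).toReal + c.toReal
    rw [hwduniv, ← ENNReal.toReal_add hItop hctop]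
    rw [hc, add_comm, tsub_add_cancel_of_le hb, ENNReal.toReal_ofReal hϑ.le]
  · have hzero : ((0 : ℝ≥0) : ℝ) ^ (m + 1) = 0 := by
      simp
    rw [hzero, mul_zero, add_zero]
    show t m = ∫ s, (s : ℝ) ^ (m + 1) ∂wd
    rw [hwd, integral_withDensity_eq_integral_smul hg]
    have hsmulae : (fun s : ℝ≥0 => (fun s : ℝ≥0 => s⁻¹) s • (s : ℝ) ^ (m + 1))
        =ᵐ[μ] (fun s : ℝ≥0 => (s : ℝ) ^ m) := by
      filter_upwards [hae] with s hs
      simp only [NNReal.smul_def, smul_eq_mul]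
      rw [NNReal.coe_inv, pow_succ]
      field_simp
    rw [integral_congr_ae hsmulae]
    exact (hμ m).2

end Chunk4
section Quad

open MeasureTheory Finset
open scoped RealInnerProductSpace

variable (a : ℕ → ℝ) (N : ℕ)

/-- Positivity of the offset quadratic form on `Fin m` vectors. -/
theorem fin_form_nonneg (off : ℕ)
    (h : ∀ (n : ℕ) (c : ℕ → ℝ),
      0 ≤ ∑ k ∈ range (n + 1), ∑ l ∈ range (n + 1), a (k + l + off) * c k * c l)
    {m : ℕ} (v : Fin m → ℝ) :
    0 ≤ ∑ i : Fin m, ∑ j : Fin m, a (↑i + ↑j + off) * v i * v j := by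
  rcases m with _ | n
  · simp
  · classical
    set c : ℕ → ℝ := fun k => if hk : k < n + 1 then v ⟨k, hk⟩ else 0 with hcdef
    have hv : ∀ i : Fin (n+1), v i = c ↑i := by
      intro i
      rw [hcdef]
      simp [i.isLt]
    have : ∑ i : Fin (n+1), ∑ j : Fin (n+1), a (↑i + ↑j + off) * v i * v j
        = ∑ k ∈ range (n + 1), ∑ l ∈ range (n + 1), a (k + l + off) * c k * c l := by
      rw [← Fin.sum_univ_eq_sum_range (fun k => ∑ l ∈ range (n + 1), a (k + l + off) * c k * c l)]
      refine Finset.sum_congr rfl fun i _ => ?_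
      rw [← Fin.sum_univ_eq_sum_range (fun l => a (↑i + l + off) * c ↑i * c l)]
      exact Finset.sum_congr rfl fun j _ => by rw [hv i, hv j]
    rw [this]
    exact h n c

/-- The (truncated) Hankel matrix of `a`. -/
def qHankel : Matrix (Fin (N+3)) (Fin (N+3)) ℝ := Matrix.of fun i j => a (↑i + ↑j)

theorem qHankel_posSemidef
    (hq0 : ∀ (n : ℕ) (c : ℕ → ℝ),
      0 ≤ ∑ k ∈ range (n + 1), ∑ l ∈ range (n + 1), a (k + l) * c k * c l) :
    (qHankel a N).PosSemidef := by
  refine Matrix.PosSemidef.of_dotProduct_mulVec_nonneg ?_ ?_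
  · ext i j
    simp [qHankel, Matrix.conjTranspose_apply, Nat.add_comm]
  · intro x
    have h0 : ∀ (n : ℕ) (c : ℕ → ℝ),
        0 ≤ ∑ k ∈ range (n + 1), ∑ l ∈ range (n + 1), a (k + l + 0) * c k * c l := by
      simpa using hq0
    have := fin_form_nonneg a 0 h0 x
    simp only [Nat.add_zero] at this
    calc (0:ℝ) ≤ ∑ i : Fin (N+3), ∑ j : Fin (N+3), a (↑i + ↑j) * x i * x j := this
      _ = dotProduct (star x) (Matrix.mulVec (qHankel a N) x) := by
          rw [dotProduct]
          refine Finset.sum_congr rfl fun i _ => ?_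
          rw [Matrix.mulVec, dotProduct]
          simp only [star_trivial, Finset.mul_sum]
          refine Finset.sum_congr rfl fun j _ => ?_
          simp [qHankel]
          ring

variable (hH : (qHankel a N).PosSemidef)

open scoped MatrixOrder

/-- Square root of the Hankel matrix. -/
def qB : Matrix (Fin (N+3)) (Fin (N+3)) ℝ := let _h := hH; CFC.sqrt (qHankel a N)

theorem qB_symm (i j : Fin (N+3)) : qB a N hH i j = qB a N hH j i := by
  have h := (Matrix.nonneg_iff_posSemidef.mp (CFC.sqrt_nonneg (qHankel a N))).1
  have := congrFun (congrFun h i) j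
  rw [Matrix.conjTranspose_apply, star_trivial] at this
  exact this.symm

theorem qB_mul (i j : Fin (N+3)) :
    ∑ x : Fin (N+3), qB a N hH x i * qB a N hH x j = a (↑i + ↑j) := by
  have h := CFC.sqrt_mul_sqrt_self (qHankel a N) hH.nonneg
  have := congrFun (congrFun h i) j
  rw [Matrix.mul_apply] at this
  calc ∑ x : Fin (N+3), qB a N hH x i * qB a N hH x j
      = ∑ x : Fin (N+3), qB a N hH i x * qB a N hH x j := by
        exact Finset.sum_congr rfl fun x _ => by rw [qB_symm a N hH x i]
    _ = a (↑i + ↑j) := this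

/-- The Gram vectors. -/
def qbvec (m : ℕ) : EuclideanSpace ℝ (Fin (N+3)) :=
  if h : m < N + 3 then (WithLp.equiv 2 (Fin (N+3) → ℝ)).symm (fun x => qB a N hH x ⟨m, h⟩)
  else 0

theorem qbvec_inner (m m' : ℕ) (hm : m < N + 3) (hm' : m' < N + 3) :
    ⟪qbvec a N hH m, qbvec a N hH m'⟫ = a (m + m') := by
  rw [qbvec, qbvec, dif_pos hm, dif_pos hm', PiLp.inner_apply]
  simp only [WithLp.equiv_symm_apply, PiLp.toLp_apply, RCLike.inner_apply, conj_trivial]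
  exact (Finset.sum_congr rfl fun x _ => mul_comm _ _).trans (qB_mul a N hH ⟨m, hm⟩ ⟨m', hm'⟩)

/-- The map from polynomial coefficients (degree `≤ N`) to Gram vectors, with shift `off`. -/
def qbeta (off : ℕ) : (Fin (N+1) → ℝ) →ₗ[ℝ] EuclideanSpace ℝ (Fin (N+3)) where
  toFun c := ∑ i : Fin (N+1), c i • qbvec a N hH (↑i + off)
  map_add' c d := by
    simp [add_smul, Finset.sum_add_distrib]
  map_smul' r c := by
    simp [smul_smul, Finset.smul_sum]

theorem qbeta_inner (off off' : ℕ) (h2 : off ≤ 2) (h2' : off' ≤ 2) (c d : Fin (N+1) → ℝ) :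
    ⟪qbeta a N hH off c, qbeta a N hH off' d⟫
      = ∑ i : Fin (N+1), ∑ j : Fin (N+1), c i * d j * a (↑i + off + (↑j + off')) := by
  show ⟪∑ i : Fin (N+1), c i • qbvec a N hH (↑i + off),
      ∑ j : Fin (N+1), d j • qbvec a N hH (↑j + off')⟫ = _
  rw [sum_inner]
  refine Finset.sum_congr rfl fun i _ => ?_
  rw [inner_sum]
  refine Finset.sum_congr rfl fun j _ => ?_
  rw [real_inner_smul_left, real_inner_smul_right]
  rw [qbvec_inner a N hH _ _ (by omega) (by omega)]
  ring

end Quad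
section Quad2

open MeasureTheory Finset
open scoped RealInnerProductSpace

variable (a : ℕ → ℝ) (N : ℕ) (hH : (qHankel a N).PosSemidef)

/-- The GNS subspace. -/
def qU : Submodule ℝ (EuclideanSpace ℝ (Fin (N+3))) := LinearMap.range (qbeta a N hH 0)

attribute [reducible] qU

/-- The compressed multiplication operator. -/
def qA : qU a N hH →ₗ[ℝ] qU a N hH :=
  ((Submodule.liftQ (LinearMap.ker (qbeta a N hH 0))
      ((Submodule.orthogonalProjectionOnto (qU a N hH)).toLinearMap.comp (qbeta a N hH 1))
      (by
        intro c hc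
        rw [LinearMap.mem_ker] at hc ⊢
        have hz : qbeta a N hH 1 c = 0 := by
          rw [← inner_self_eq_zero (𝕜 := ℝ)]
          have h1 : ⟪qbeta a N hH 1 c, qbeta a N hH 1 c⟫
              = ∑ i : Fin (N+1), ∑ j : Fin (N+1), c i * c j * a (↑i + 1 + (↑j + 1)) :=
            qbeta_inner a N hH 1 1 (by omega) (by omega) c c
          have h2 : ⟪qbeta a N hH 2 c, qbeta a N hH 0 c⟫
              = ∑ i : Fin (N+1), ∑ j : Fin (N+1), c i * c j * a (↑i + 2 + (↑j + 0)) :=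
            qbeta_inner a N hH 2 0 (by omega) (by omega) c c
          have h3 : ⟪qbeta a N hH 2 c, qbeta a N hH 0 c⟫ = 0 := by
            rw [hc, inner_zero_right]
          rw [h1, ← h3, h2]
          refine Finset.sum_congr rfl fun i _ => Finset.sum_congr rfl fun j _ => ?_
          rw [show ((i:ℕ) + 1 + ((j:ℕ) + 1)) = (i:ℕ) + 2 + ((j:ℕ) + 0) from by omega]
        simp [hz]))).comp
    (LinearMap.quotKerEquivRange (qbeta a N hH 0)).symm.toLinearMap

theorem qA_apply (c : Fin (N+1) → ℝ) (hc : qbeta a N hH 0 c ∈ qU a N hH) :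
    qA a N hH ⟨qbeta a N hH 0 c, hc⟩
      = Submodule.orthogonalProjectionOnto (qU a N hH) (qbeta a N hH 1 c) := by
  rw [qA, LinearMap.comp_apply]
  have : ((LinearMap.quotKerEquivRange (qbeta a N hH 0)).symm.toLinearMap)
      ⟨qbeta a N hH 0 c, hc⟩ = Submodule.Quotient.mk c := by
    exact LinearMap.quotKerEquivRange_symm_apply_image (qbeta a N hH 0) c hc
  exact congrArg _ this

theorem qA_inner (c d : Fin (N+1) → ℝ) (hc : qbeta a N hH 0 c ∈ qU a N hH)
    (hd : qbeta a N hH 0 d ∈ qU a N hH) :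
    ⟪(qA a N hH ⟨qbeta a N hH 0 c, hc⟩ : EuclideanSpace ℝ (Fin (N+3))), qbeta a N hH 0 d⟫
      = ∑ i : Fin (N+1), ∑ j : Fin (N+1), c i * d j * a (↑i + 1 + (↑j + 0)) := by
  rw [qA_apply]
  have hproj : ⟪(Submodule.orthogonalProjectionOnto (qU a N hH) (qbeta a N hH 1 c)
        : EuclideanSpace ℝ (Fin (N+3))), qbeta a N hH 0 d⟫
      = ⟪qbeta a N hH 1 c, qbeta a N hH 0 d⟫ := by
    have h0 := Submodule.starProjection_inner_eq_zero (K := qU a N hH) (qbeta a N hH 1 c)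
      (qbeta a N hH 0 d) (LinearMap.mem_range_self _ d)
    rw [inner_sub_left, sub_eq_zero] at h0
    exact h0.symm
  rw [hproj]
  exact qbeta_inner a N hH 1 0 (by omega) (by omega) c d

theorem qA_symm : (qA a N hH).IsSymmetric := by
  intro x y
  obtain ⟨c, hc⟩ := x.2
  obtain ⟨d, hd⟩ := y.2
  have hx : x = ⟨qbeta a N hH 0 c, by rw [hc]; exact x.2⟩ := by
    apply Subtype.ext
    exact hc.symm
  have hy : y = ⟨qbeta a N hH 0 d, by rw [hd]; exact y.2⟩ := by
    apply Subtype.ext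
    exact hd.symm
  rw [hx, hy]
  rw [Submodule.coe_inner, Submodule.coe_inner]
  rw [qA_inner a N hH c d (by rw [hc]; exact x.2) (by rw [hd]; exact y.2)]
  rw [real_inner_comm]
  rw [qA_inner a N hH d c (by rw [hd]; exact y.2) (by rw [hc]; exact x.2)]
  rw [← Finset.sum_comm]
  refine Finset.sum_congr rfl fun i _ => Finset.sum_congr rfl fun j _ => ?_
  rw [show ((j:ℕ) + 1 + ((i:ℕ) + 0)) = (i:ℕ) + 1 + ((j:ℕ) + 0) from by omega]
  ring

theorem qA_nonneg (x : qU a N hH)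
    (hq1 : ∀ (n : ℕ) (c : ℕ → ℝ),
      0 ≤ ∑ k ∈ range (n + 1), ∑ l ∈ range (n + 1), a (k + l + 1) * c k * c l) :
    0 ≤ ⟪qA a N hH x, x⟫ := by
  obtain ⟨c, hc⟩ := x.2
  have hx : x = ⟨qbeta a N hH 0 c, by rw [hc]; exact x.2⟩ := by
    apply Subtype.ext
    exact hc.symm
  rw [hx, Submodule.coe_inner,
    qA_inner a N hH c c (by rw [hc]; exact x.2) (by rw [hc]; exact x.2)]
  have := fin_form_nonneg a 1 hq1 c
  calc (0:ℝ) ≤ ∑ i : Fin (N+1), ∑ j : Fin (N+1), a (↑i + ↑j + 1) * c i * c j := this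
    _ = ∑ i : Fin (N+1), ∑ j : Fin (N+1), c i * c j * a (↑i + 1 + (↑j + 0)) := by
        refine Finset.sum_congr rfl fun i _ => Finset.sum_congr rfl fun j _ => ?_
        rw [show (↑i + 1 + (↑j + 0) : ℕ) = ↑i + ↑j + 1 by omega]
        ring

end Quad2
section Quad3

open MeasureTheory Finset
open scoped RealInnerProductSpace

variable (a : ℕ → ℝ) (N : ℕ) (hH : (qHankel a N).PosSemidef)

/-- The coefficient vector of the monomial `x^k`. -/
def qe (k : ℕ) : Fin (N+1) → ℝ := fun i => if (i : ℕ) = k then 1 else 0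

theorem qbeta_qe (off k : ℕ) (hk : k ≤ N) :
    qbeta a N hH off (qe N k) = qbvec a N hH (k + off) := by
  show (∑ i : Fin (N+1), qe N k i • qbvec a N hH (↑i + off)) = _
  rw [Finset.sum_eq_single (⟨k, by omega⟩ : Fin (N+1))]
  · simp [qe]
  · intro i _ hne
    have : (i : ℕ) ≠ k := by
      intro h
      exact hne (Fin.ext h)
    simp [qe, this]
  · intro h
    exact absurd (Finset.mem_univ _) h

theorem qA_pow_omega (k : ℕ) (hk : k ≤ N) :
    (qA a N hH ^ k) ⟨qbeta a N hH 0 (qe N 0), LinearMap.mem_range_self _ _⟩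
      = ⟨qbeta a N hH 0 (qe N k), LinearMap.mem_range_self _ _⟩ := by
  induction k with
  | zero => simp
  | succ m ih =>
    have hm : m ≤ N := by omega
    rw [pow_succ', Module.End.mul_apply, ih hm]
    rw [qA_apply a N hH (qe N m) (LinearMap.mem_range_self _ _)]
    have h1 : qbeta a N hH 1 (qe N m) = qbeta a N hH 0 (qe N (m+1)) := by
      rw [qbeta_qe a N hH 1 m hm, qbeta_qe a N hH 0 (m+1) hk]
    rw [h1]
    exact Submodule.orthogonalProjectionOnto_mem_subspace_eq_self
      (⟨qbeta a N hH 0 (qe N (m+1)), LinearMap.mem_range_self _ _⟩ : qU a N hH)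

theorem qA_moment (k : ℕ) (hk : k ≤ N) :
    ⟪(qA a N hH ^ k) ⟨qbeta a N hH 0 (qe N 0), LinearMap.mem_range_self _ _⟩,
      (⟨qbeta a N hH 0 (qe N 0), LinearMap.mem_range_self _ _⟩ : qU a N hH)⟫ = a k := by
  rw [qA_pow_omega a N hH k hk, Submodule.coe_inner]
  show ⟪qbeta a N hH 0 (qe N k), qbeta a N hH 0 (qe N 0)⟫ = a k
  rw [qbeta_qe a N hH 0 k hk, qbeta_qe a N hH 0 0 (by omega)]
  rw [qbvec_inner a N hH (k+0) (0+0) (by omega) (by omega)]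
  norm_num

/-- Quadrature: finitely many nonnegative nodes and weights matching the moments up to `N`. -/
theorem quadrature
    (hq0 : ∀ (n : ℕ) (c : ℕ → ℝ),
      0 ≤ ∑ k ∈ range (n + 1), ∑ l ∈ range (n + 1), a (k + l) * c k * c l)
    (hq1 : ∀ (n : ℕ) (c : ℕ → ℝ),
      0 ≤ ∑ k ∈ range (n + 1), ∑ l ∈ range (n + 1), a (k + l + 1) * c k * c l) :
    ∃ (d : ℕ) (x w : Fin d → ℝ), (∀ i, 0 ≤ x i) ∧ (∀ i, 0 ≤ w i) ∧
      ∀ k ≤ N, (∑ i, w i * x i ^ k) = a k := by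
  have hH : (qHankel a N).PosSemidef := qHankel_posSemidef a N hq0
  set d := Module.finrank ℝ (qU a N hH) with hd
  have hsym := qA_symm a N hH
  set f := hsym.eigenvectorBasis (n := d) rfl with hf
  set lam := hsym.eigenvalues (n := d) rfl with hlam
  have happly : ∀ i, qA a N hH (f i) = lam i • f i := fun i => by
    have := hsym.apply_eigenvectorBasis (n := d) rfl i
    rwa [← hf, ← hlam] at this
  set ω : qU a N hH := ⟨qbeta a N hH 0 (qe N 0), LinearMap.mem_range_self _ _⟩ with hω
  have hlam_nonneg : ∀ i, 0 ≤ lam i := by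
    intro i
    have h1 : ⟪qA a N hH (f i), f i⟫ = lam i := by
      have hnorm : ⟪f i, f i⟫ = 1 := by
        rw [real_inner_self_eq_norm_sq, f.orthonormal.1 i]
        norm_num
      rw [happly i, real_inner_smul_left (F := qU a N hH), hnorm, mul_one]
    rw [← h1]
    exact qA_nonneg a N hH (f i) hq1
  have hpow_basis : ∀ (k : ℕ) (i : Fin d), (qA a N hH ^ k) (f i) = (lam i ^ k) • f i := by
    intro k i
    induction k with
    | zero => simp
    | succ m ih =>
      rw [pow_succ', Module.End.mul_apply, ih, LinearMap.map_smul, happly i, smul_smul, pow_succ]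
  refine ⟨d, lam, fun i => (f.repr ω i) ^ 2, hlam_nonneg, fun i => sq_nonneg _, ?_⟩
  intro k hk
  have hexp : (qA a N hH ^ k) ω = ∑ i, (f.repr ω i * lam i ^ k) • f i := by
    conv_lhs => rw [← f.sum_repr ω]
    rw [map_sum]
    refine Finset.sum_congr rfl fun i _ => ?_
    rw [LinearMap.map_smul, hpow_basis k i, smul_smul]
  have hmom := qA_moment a N hH k hk
  rw [← hmom, hexp, sum_inner]
  refine Finset.sum_congr rfl fun i _ => ?_
  rw [real_inner_smul_left (F := qU a N hH)]
  rw [← OrthonormalBasis.repr_apply_apply]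
  ring

end Quad3
section CDF

open MeasureTheory Finset Set

/-- Even and odd "moments" of a doubly positive definite sequence are nonnegative. -/
theorem a_nonneg {a : ℕ → ℝ}
    (hq0 : ∀ (n : ℕ) (c : ℕ → ℝ),
      0 ≤ ∑ k ∈ Finset.range (n + 1), ∑ l ∈ Finset.range (n + 1), a (k + l) * c k * c l)
    (hq1 : ∀ (n : ℕ) (c : ℕ → ℝ),
      0 ≤ ∑ k ∈ Finset.range (n + 1), ∑ l ∈ Finset.range (n + 1), a (k + l + 1) * c k * c l)
    (n : ℕ) : 0 ≤ a n := by
  rcases Nat.even_or_odd n with ⟨m, hm⟩ | ⟨m, hm⟩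
  · have := hq0 m (fun k => if k = m then 1 else 0)
    classical
    rw [Finset.sum_eq_single m, Finset.sum_eq_single m] at this
    · simpa [hm, two_mul] using this
    · intro l _ hne
      simp [hne]
    · intro h
      exact absurd (Finset.self_mem_range_succ m) h
    · intro k _ hne
      simp [hne, Finset.sum_ite_eq']
    · intro h
      exact absurd (Finset.self_mem_range_succ m) h
  · have := hq1 m (fun k => if k = m then 1 else 0)
    classical
    rw [Finset.sum_eq_single m, Finset.sum_eq_single m] at this
    · simpa [hm, two_mul] using this
    · intro l _ hne
      simp [hne]
    · intro h
      exact absurd (Finset.self_mem_range_succ m) h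
    · intro k _ hne
      simp [hne, Finset.sum_ite_eq']
    · intro h
      exact absurd (Finset.self_mem_range_succ m) h

variable {d : ℕ} (x w : Fin d → ℝ)

/-- The cumulative distribution function of the atomic measure `∑ wᵢ δ_{xᵢ}`. -/
def cdfF (r : ℝ) : ℝ := ∑ i ∈ Finset.univ.filter (fun i => x i ≤ r), w i

theorem cdfF_mono (hw : ∀ i, 0 ≤ w i) : Monotone (cdfF x w) := by
  intro r r' hr
  refine Finset.sum_le_sum_of_subset_of_nonneg ?_ (fun i _ _ => hw i)
  intro i hi
  rw [Finset.mem_filter] at hi ⊢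
  exact ⟨hi.1, le_trans hi.2 hr⟩

theorem cdfF_nonneg (hw : ∀ i, 0 ≤ w i) (r : ℝ) : 0 ≤ cdfF x w r :=
  Finset.sum_nonneg fun i _ => hw i

theorem cdfF_le (hw : ∀ i, 0 ≤ w i) (r : ℝ) : cdfF x w r ≤ ∑ i, w i :=
  Finset.sum_le_sum_of_subset_of_nonneg (Finset.filter_subset _ _) (fun i _ _ => hw i)

theorem cdfF_neg (hx : ∀ i, 0 ≤ x i) {r : ℝ} (hr : r < 0) : cdfF x w r = 0 := by
  rw [cdfF, Finset.sum_eq_zero]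
  intro i hi
  rw [Finset.mem_filter] at hi
  exact absurd (lt_of_le_of_lt (le_trans (hx i) hi.2) hr) (lt_irrefl 0)

theorem cdfF_tail (r : ℝ) :
    (∑ i, w i) - cdfF x w r = ∑ i, if r < x i then w i else 0 := by
  classical
  rw [cdfF, sub_eq_iff_eq_add, Finset.sum_ite, Finset.sum_const_zero, add_zero,
    ← Finset.sum_filter_add_sum_filter_not Finset.univ (fun i => x i ≤ r) w, add_comm]
  congr 1
  refine Finset.sum_congr (Finset.filter_congr fun i _ => by simp [not_le]) fun _ _ => rfl

/-- Chebyshev-type tail estimate. -/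
theorem cdfF_tail_le (hx : ∀ i, 0 ≤ x i) (hw : ∀ i, 0 ≤ w i) {r : ℝ} (hr : 0 < r) (m : ℕ) :
    (∑ i, w i) - cdfF x w r ≤ (∑ i, w i * x i ^ m) / r ^ m := by
  rw [cdfF_tail x w r, le_div_iff₀ (by positivity)]
  rw [Finset.sum_mul]
  refine Finset.sum_le_sum fun i _ => ?_
  by_cases h : r < x i
  · rw [if_pos h]
    exact mul_le_mul_of_nonneg_left (pow_le_pow_left₀ hr.le h.le m) (hw i)
  · rw [if_neg h, zero_mul]
    exact mul_nonneg (hw i) (pow_nonneg (hx i) m)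

theorem cdfF_tail_fun (A0 : ℝ) (h0 : ∑ i, w i = A0) (m : ℕ) (t : ℝ) :
    (A0 - cdfF x w t) * ((m + 1 : ℝ) * t ^ m)
      = ∑ i, Set.indicator (Set.Iio (x i)) (fun s => w i * ((m + 1 : ℝ) * s ^ m)) t := by
  classical
  rw [← h0, cdfF_tail x w t, Finset.sum_mul]
  refine Finset.sum_congr rfl fun i _ => ?_
  rw [Set.indicator_apply]
  by_cases h : t < x i
  · rw [if_pos h, if_pos (Set.mem_Iio.mpr h)]
  · rw [if_neg h, if_neg (fun hc => h (Set.mem_Iio.mp hc)), zero_mul]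

theorem indicator_intOn (i : Fin d) (hxi : 0 ≤ x i) (m : ℕ) :
    IntegrableOn (Set.indicator (Set.Iio (x i)) (fun s => w i * ((m + 1 : ℝ) * s ^ m)))
      (Set.Ioi (0:ℝ)) := by
  rw [IntegrableOn, MeasureTheory.integrable_indicator_iff measurableSet_Iio]
  rw [IntegrableOn, Measure.restrict_restrict measurableSet_Iio]
  have hset : Set.Iio (x i) ∩ Set.Ioi (0:ℝ) = Set.Ioo 0 (x i) := by
    rw [Set.inter_comm, Set.Ioi_inter_Iio]
  rw [hset]
  have hpoly : IntegrableOn (fun s : ℝ => s ^ m) (Set.Ioo 0 (x i)) :=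
    ((intervalIntegral.intervalIntegrable_pow m (a := 0) (b := x i) (μ := volume)).1).mono_set
      Set.Ioo_subset_Ioc_self
  have := (hpoly.const_mul ((m + 1 : ℝ))).const_mul (w i)
  exact this

theorem cdfF_integrableOn (hx : ∀ i, 0 ≤ x i) (A0 : ℝ) (h0 : ∑ i, w i = A0) (m : ℕ) :
    IntegrableOn (fun t => (A0 - cdfF x w t) * ((m + 1 : ℝ) * t ^ m)) (Set.Ioi (0:ℝ)) := by
  have : (fun t => (A0 - cdfF x w t) * ((m + 1 : ℝ) * t ^ m))
      = fun t => ∑ i, Set.indicator (Set.Iio (x i)) (fun s => w i * ((m + 1 : ℝ) * s ^ m)) t := by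
    funext t
    exact cdfF_tail_fun x w A0 h0 m t
  rw [this]
  exact MeasureTheory.integrable_finset_sum _ (fun i _ => indicator_intOn x w i (hx i) m)

theorem cdfF_integral (hx : ∀ i, 0 ≤ x i) (A0 : ℝ) (h0 : ∑ i, w i = A0) (m : ℕ) :
    ∫ t in Set.Ioi (0:ℝ), (A0 - cdfF x w t) * ((m + 1 : ℝ) * t ^ m)
      = ∑ i, w i * x i ^ (m + 1) := by
  rw [MeasureTheory.integral_congr_ae
    (Filter.Eventually.of_forall (fun t => cdfF_tail_fun x w A0 h0 m t))]
  rw [MeasureTheory.integral_finset_sum _ (fun i _ => indicator_intOn x w i (hx i) m)]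
  refine Finset.sum_congr rfl fun i _ => ?_
  rw [MeasureTheory.integral_indicator measurableSet_Iio]
  rw [Measure.restrict_restrict measurableSet_Iio]
  have hset : Set.Iio (x i) ∩ Set.Ioi (0:ℝ) = Set.Ioo 0 (x i) := by
    rw [Set.inter_comm, Set.Ioi_inter_Iio]
  rw [hset]
  rw [← MeasureTheory.integral_Ioc_eq_integral_Ioo]
  rw [← intervalIntegral.integral_of_le (hx i)]
  rw [intervalIntegral.integral_const_mul, intervalIntegral.integral_const_mul]
  rw [integral_pow]
  have hm : (m + 1 : ℝ) ≠ 0 := by positivity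
  field_simp
  simp

end CDF
section Helly

open MeasureTheory Finset Set Filter Topology

/-- Helly-type selection: from a sequence of uniformly bounded monotone cdfs with uniform
tail bounds, extract a subsequence converging a.e. to a Stieltjes function. -/
theorem exists_limit_cdf (a : ℕ → ℝ) (ha : ∀ n, 0 ≤ a n) (F : ℕ → ℝ → ℝ)
    (hmono : ∀ j, Monotone (F j))
    (hFnn : ∀ j r, 0 ≤ F j r) (hFle : ∀ j r, F j r ≤ a 0)
    (hFneg : ∀ j r, r < 0 → F j r = 0)
    (htail : ∀ j k, k ≤ j → ∀ r : ℝ, 0 < r → a 0 - F j r ≤ a k / r ^ k) :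
    ∃ (SF : StieltjesFunction ℝ) (φ : ℕ → ℕ), StrictMono φ ∧
      (∀ r, 0 ≤ SF r) ∧ (∀ r, SF r ≤ a 0) ∧ (∀ r, r < 0 → SF r = 0) ∧
      (∀ k, 1 ≤ k → ∀ r : ℝ, 0 < r → a 0 - SF r ≤ a k / r ^ k) ∧
      Filter.Tendsto SF Filter.atBot (nhds 0) ∧ Filter.Tendsto SF Filter.atTop (nhds (a 0)) ∧
      (∀ᵐ r ∂(volume : Measure ℝ), Filter.Tendsto (fun n => F (φ n) r) Filter.atTop (nhds (SF r))) := by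
  classical
  -- sequential compactness in the product of intervals
  set X := ℚ → Set.Icc (0:ℝ) (a 0) with hX
  have : ∀ j (q : ℚ), F j q ∈ Set.Icc (0:ℝ) (a 0) := fun j q => ⟨hFnn j q, hFle j q⟩
  set seq : ℕ → X := fun j q => ⟨F j q, this j q⟩ with hseq
  obtain ⟨G0, φ, hφ, hconv⟩ := CompactSpace.tendsto_subseq seq
  set G : ℚ → ℝ := fun q => (G0 q : ℝ) with hG
  have hGconv : ∀ q : ℚ, Tendsto (fun n => F (φ n) q) atTop (𝓝 (G q)) := by
    intro q
    have h1 : Tendsto (fun n => (seq ∘ φ) n q) atTop (𝓝 (G0 q)) := by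
      exact (continuous_apply q).continuousAt.tendsto.comp hconv
    exact ((continuous_subtype_val.tendsto _).comp h1 : _)
  have hGmono : ∀ q q' : ℚ, q ≤ q' → G q ≤ G q' := fun q q' h =>
    le_of_tendsto_of_tendsto' (hGconv q) (hGconv q')
      (fun n => hmono (φ n) (by exact_mod_cast h))
  have hGnn : ∀ q, 0 ≤ G q := fun q => (G0 q).2.1
  have hGle : ∀ q, G q ≤ a 0 := fun q => (G0 q).2.2
  have hGneg : ∀ q : ℚ, (q:ℝ) < 0 → G q = 0 := by
    intro q hq
    refine tendsto_nhds_unique (hGconv q) ?_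
    have : (fun n => F (φ n) q) = fun _ => 0 := funext fun n => hFneg (φ n) q hq
    rw [this]
    exact tendsto_const_nhds
  have hGtail : ∀ (k : ℕ) (q : ℚ), 0 < (q:ℝ) → a 0 - G q ≤ a k / (q:ℝ) ^ k := by
    intro k q hq
    have h1 : Tendsto (fun n => a 0 - F (φ n) q) atTop (𝓝 (a 0 - G q)) :=
      tendsto_const_nhds.sub (hGconv q)
    refine le_of_tendsto h1 ?_
    filter_upwards [eventually_ge_atTop k] with n hn
    exact htail (φ n) k (le_trans hn (hφ.le_apply)) q hq
  -- the limit Stieltjes function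
  set S : ℝ → Set ℝ := fun r => G '' {q : ℚ | r < (q:ℝ)} with hS
  have hne : ∀ r, (S r).Nonempty := by
    intro r
    obtain ⟨q, hq⟩ := exists_rat_gt r
    exact ⟨G q, ⟨q, hq, rfl⟩⟩
  have hbdd : ∀ r, BddBelow (S r) := by
    intro r
    refine ⟨0, ?_⟩
    rintro y ⟨q, _, rfl⟩
    exact hGnn q
  set Flim : ℝ → ℝ := fun r => sInf (S r) with hFlim
  have hFlim_le : ∀ (r : ℝ) (q : ℚ), r < q → Flim r ≤ G q := fun r q h =>
    csInf_le (hbdd r) ⟨q, h, rfl⟩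
  have hle_Flim : ∀ (q : ℚ) (r : ℝ), (q:ℝ) ≤ r → G q ≤ Flim r := by
    intro q r h
    refine le_csInf (hne r) ?_
    rintro y ⟨q', hq', rfl⟩
    refine hGmono q q' ?_
    exact_mod_cast le_of_lt (lt_of_le_of_lt h hq')
  have hFlim_mono : Monotone Flim := by
    intro r r' h
    refine le_csInf (hne r') ?_
    rintro y ⟨q, hq, rfl⟩
    exact hFlim_le r q (lt_of_le_of_lt h hq)
  have hFlim_nn : ∀ r, 0 ≤ Flim r := by
    intro r
    refine le_csInf (hne r) ?_
    rintro y ⟨q, _, rfl⟩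
    exact hGnn q
  have hFlim_le_a0 : ∀ r, Flim r ≤ a 0 := by
    intro r
    obtain ⟨q, hq⟩ := exists_rat_gt r
    exact le_trans (hFlim_le r q hq) (hGle q)
  have hFlim_neg : ∀ r : ℝ, r < 0 → Flim r = 0 := by
    intro r hr
    obtain ⟨q, hq1, hq2⟩ := exists_rat_btwn hr
    refine le_antisymm ?_ (hFlim_nn r)
    rw [← hGneg q hq2]
    exact hFlim_le r q hq1
  have hFlim_tail : ∀ (k : ℕ) (r : ℝ), 0 < r → a 0 - Flim r ≤ a k / r ^ k := by
    intro k r hr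
    have hlb : ∀ y ∈ S r, a 0 - a k / r ^ k ≤ y := by
      rintro y ⟨q, hq, rfl⟩
      have hq0 : 0 < (q:ℝ) := lt_trans hr hq
      have h1 := hGtail k q hq0
      have h2 : a k / (q:ℝ) ^ k ≤ a k / r ^ k := by
        rw [div_le_div_iff₀ (by positivity) (by positivity)]
        exact mul_le_mul_of_nonneg_left (pow_le_pow_left₀ hr.le (le_of_lt hq) k) (ha k)
      linarith
    have h3 : a 0 - a k / r ^ k ≤ Flim r := le_csInf (hne r) hlb
    linarith
  -- right continuity
  have hrc : ∀ r : ℝ, ContinuousWithinAt Flim (Set.Ici r) r := by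
    intro r
    rw [Metric.continuousWithinAt_iff]
    intro ε hε
    obtain ⟨y, hymem, hylt⟩ := exists_lt_of_csInf_lt (hne r)
      (show sInf (S r) < Flim r + ε by simpa [Flim] using hε)
    obtain ⟨q, hq, rfl⟩ := hymem
    rw [Set.mem_setOf_eq] at hq
    refine ⟨(q:ℝ) - r, by linarith, ?_⟩
    intro y' hy' hdist
    rw [Real.dist_eq] at hdist
    have hy'r : r ≤ y' := hy'
    have hy'q : y' < q := by
      rw [abs_lt] at hdist
      linarith [hdist.1, hdist.2]
    have h1 : Flim r ≤ Flim y' := hFlim_mono hy'r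
    have h2 : Flim y' ≤ G q := hFlim_le y' q hy'q
    rw [Real.dist_eq, abs_lt]
    constructor <;> linarith
  set SF : StieltjesFunction ℝ := ⟨Flim, hFlim_mono, hrc⟩ with hSF
  have hSF_eq : ∀ r, SF r = Flim r := fun _ => rfl
  -- limits at infinity
  have hbot : Tendsto Flim atBot (𝓝 0) := by
    refine tendsto_const_nhds.congr' ?_
    filter_upwards [eventually_le_atBot (-1 : ℝ)] with r hr
    exact (hFlim_neg r (by linarith)).symm
  have htop : Tendsto Flim atTop (𝓝 (a 0)) := by
    have hg : Tendsto (fun r : ℝ => a 0 - a 1 / r) atTop (𝓝 (a 0)) := by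
      have := Tendsto.div_atTop (tendsto_const_nhds (x := a 1)) tendsto_id (l := atTop)
      have h2 := (tendsto_const_nhds (x := a 0)).sub this
      simpa using h2
    refine tendsto_of_tendsto_of_tendsto_of_le_of_le' hg tendsto_const_nhds ?_ ?_
    · filter_upwards [eventually_ge_atTop (1:ℝ)] with r hr
      have := hFlim_tail 1 r (by linarith)
      rw [pow_one] at this
      linarith
    · exact Eventually.of_forall hFlim_le_a0
  -- a.e. pointwise convergence along the subsequence
  have hptwise : ∀ r : ℝ, ContinuousAt Flim r →
      Tendsto (fun n => F (φ n) r) atTop (𝓝 (Flim r)) := by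
    intro r hc
    rw [Metric.tendsto_atTop]
    intro ε hε
    -- upper rational
    obtain ⟨yq, hymem, hylt⟩ := exists_lt_of_csInf_lt (hne r)
      (show sInf (S r) < Flim r + ε / 2 by simpa [Flim] using half_pos hε)
    obtain ⟨q, hq, rfl⟩ := hymem
    rw [Set.mem_setOf_eq] at hq
    -- lower rational via continuity
    rw [Metric.continuousAt_iff] at hc
    obtain ⟨δ, hδ, hball⟩ := hc (ε/2) (half_pos hε)
    have hr' : r - δ/2 < r := by linarith
    obtain ⟨q', hq'1, hq'2⟩ := exists_rat_btwn hr'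
    have hFlimr' : Flim r - ε/2 < Flim (r - δ/2) := by
      have : dist (Flim (r - δ/2)) (Flim r) < ε / 2 := by
        apply hball
        rw [Real.dist_eq, abs_lt]
        constructor <;> [linarith; linarith]
      rw [Real.dist_eq, abs_lt] at this
      linarith [this.1]
    have hGq' : Flim (r - δ/2) ≤ G q' := hFlim_le _ q' hq'1
    -- convergence at q and q'
    obtain ⟨N1, hN1⟩ := Metric.tendsto_atTop.mp (hGconv q) (ε/2) (half_pos hε)
    obtain ⟨N2, hN2⟩ := Metric.tendsto_atTop.mp (hGconv q') (ε/2) (half_pos hε)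
    refine ⟨max N1 N2, fun n hn => ?_⟩
    have h1 := hN1 n (le_trans (le_max_left _ _) hn)
    have h2 := hN2 n (le_trans (le_max_right _ _) hn)
    rw [Real.dist_eq, abs_lt] at h1 h2
    have hup : F (φ n) r ≤ F (φ n) q := hmono (φ n) hq.le
    have hdown : F (φ n) q' ≤ F (φ n) r := hmono (φ n) hq'2.le
    rw [Real.dist_eq, abs_lt]
    constructor
    · -- -ε < F (φ n) r - Flim r
      have : G q' - ε/2 < F (φ n) q' := by linarith [h2.1]
      have h3 : Flim r - ε < F (φ n) q' := by linarith
      linarith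
    · have : F (φ n) q < G q + ε/2 := by linarith [h1.2]
      linarith
  have hae : ∀ᵐ r ∂(volume : Measure ℝ),
      Tendsto (fun n => F (φ n) r) atTop (𝓝 (Flim r)) := by
    have hD : Set.Countable {r : ℝ | ¬ContinuousAt Flim r} :=
      hFlim_mono.countable_not_continuousAt
    rw [MeasureTheory.ae_iff]
    refine measure_mono_null ?_ (hD.measure_zero volume)
    intro r hr
    rw [Set.mem_setOf_eq] at hr ⊢
    intro hcont
    exact hr (hptwise r hcont)
  exact ⟨SF, φ, hφ, hFlim_nn, hFlim_le_a0, hFlim_neg,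
    fun k _ r hr => hFlim_tail k r hr, hbot, htop, hae⟩

end Helly
section DCT

open MeasureTheory Finset Set Filter Topology

theorem limit_moment (a : ℕ → ℝ) (ha : ∀ n, 0 ≤ a n)
    (F : ℕ → ℝ → ℝ) (φ : ℕ → ℕ) (hφ : StrictMono φ)
    (SF : StieltjesFunction ℝ)
    (hSFnn : ∀ r, 0 ≤ SF r) (hSFle : ∀ r, SF r ≤ a 0)
    (hSFtail : ∀ k, 1 ≤ k → ∀ r : ℝ, 0 < r → a 0 - SF r ≤ a k / r ^ k)
    (hae : ∀ᵐ r ∂(volume : Measure ℝ), Tendsto (fun n => F (φ n) r) atTop (𝓝 (SF r)))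
    (hFnn : ∀ j r, 0 ≤ F j r) (hFle : ∀ j r, F j r ≤ a 0)
    (htail : ∀ j k, k ≤ j → ∀ r : ℝ, 0 < r → a 0 - F j r ≤ a k / r ^ k)
    (hFmeas : ∀ j, Measurable (F j))
    (hFint : ∀ (j m : ℕ), m + 1 ≤ j →
      (∫ t in Set.Ioi (0:ℝ), (a 0 - F j t) * (((m:ℝ)+1) * t ^ m)) = a (m+1))
    (m : ℕ) :
    IntegrableOn (fun t => (a 0 - SF t) * (((m:ℝ)+1) * t ^ m)) (Set.Ioi (0:ℝ)) ∧
    (∫ t in Set.Ioi (0:ℝ), (a 0 - SF t) * (((m:ℝ)+1) * t ^ m)) = a (m+1) := by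
  classical
  set K := m + 3 with hK
  set bound : ℝ → ℝ := fun t => min (a 0) (a K / t ^ K) * (((m:ℝ)+1) * t ^ m) with hbound
  have hbm : Measurable bound := by
    exact (measurable_const.min (measurable_const.div (measurable_id.pow_const K))).mul
      ((measurable_id.pow_const m).const_mul ((m:ℝ)+1))
  -- two generic pointwise bounds
  have hpt : ∀ (g : ℝ → ℝ), (∀ r, 0 ≤ g r) → (∀ r, g r ≤ a 0) →
      (∀ r : ℝ, 0 < r → a 0 - g r ≤ a K / r ^ K) →
      ∀ t : ℝ, t ∈ Set.Ioi (0:ℝ) → ‖(a 0 - g t) * (((m:ℝ)+1) * t ^ m)‖ ≤ bound t := by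
    intro g hg0 hg1 hgt t ht
    rw [Set.mem_Ioi] at ht
    have h1 : 0 ≤ a 0 - g t := by linarith [hg1 t]
    have h2 : (0:ℝ) ≤ ((m:ℝ)+1) * t ^ m := by positivity
    rw [Real.norm_eq_abs, abs_of_nonneg (mul_nonneg h1 h2)]
    refine mul_le_mul_of_nonneg_right ?_ h2
    exact le_min (by linarith [hg0 t]) (hgt t ht)
  -- integrability of the bound
  have hbound_int : IntegrableOn bound (Set.Ioi (0:ℝ)) := by
    have hsplit : Set.Ioc (0:ℝ) 1 ∪ Set.Ioi 1 = Set.Ioi (0:ℝ) :=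
      Set.Ioc_union_Ioi_eq_Ioi zero_le_one
    rw [← hsplit]
    refine MeasureTheory.IntegrableOn.union ?_ ?_
    · -- on (0,1]: bounded by a constant
      refine Integrable.mono' (g := fun _ : ℝ => a 0 * (((m:ℝ)+1) * 1))
        (integrableOn_const measure_Ioc_lt_top.ne)
        (hbm.aestronglyMeasurable.restrict) ?_
      rw [ae_restrict_iff' measurableSet_Ioc]
      refine Filter.Eventually.of_forall fun t ht => ?_
      obtain ⟨ht0, ht1⟩ := ht
      have h2 : (0:ℝ) ≤ ((m:ℝ)+1) * t ^ m := by positivity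
      have hmin0 : 0 ≤ min (a 0) (a K / t ^ K) := le_min (ha 0) (div_nonneg (ha K) (by positivity))
      rw [Real.norm_eq_abs, abs_of_nonneg (mul_nonneg hmin0 h2)]
      have htm : t ^ m ≤ 1 := pow_le_one₀ ht0.le ht1
      calc min (a 0) (a K / t ^ K) * (((m:ℝ)+1) * t ^ m)
          ≤ a 0 * (((m:ℝ)+1) * t ^ m) :=
            mul_le_mul_of_nonneg_right (min_le_left _ _) h2
        _ ≤ a 0 * (((m:ℝ)+1) * 1) := by
            refine mul_le_mul_of_nonneg_left ?_ (ha 0)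
            refine mul_le_mul_of_nonneg_left htm (by positivity)
    · -- on (1,∞): bounded by C₂ t⁻²
      refine Integrable.mono' (g := fun t : ℝ => (a K * ((m:ℝ)+1)) * t ^ (-2:ℝ))
        ((integrableOn_Ioi_rpow_of_lt (by norm_num) one_pos).const_mul _)
        (hbm.aestronglyMeasurable.restrict) ?_
      rw [ae_restrict_iff' measurableSet_Ioi]
      refine Filter.Eventually.of_forall fun t ht => ?_
      rw [Set.mem_Ioi] at ht
      have ht0 : (0:ℝ) < t := lt_trans one_pos ht
      have h2 : (0:ℝ) ≤ ((m:ℝ)+1) * t ^ m := by positivity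
      have hmin0 : 0 ≤ min (a 0) (a K / t ^ K) := le_min (ha 0) (div_nonneg (ha K) (by positivity))
      rw [Real.norm_eq_abs, abs_of_nonneg (mul_nonneg hmin0 h2)]
      have hstep1 : min (a 0) (a K / t ^ K) * (((m:ℝ)+1) * t ^ m)
          ≤ (a K / t ^ K) * (((m:ℝ)+1) * t ^ m) :=
        mul_le_mul_of_nonneg_right (min_le_right _ _) h2
      have hstep2 : (a K / t ^ K) * (((m:ℝ)+1) * t ^ m) = (a K * ((m:ℝ)+1)) / t ^ 3 := by
        rw [hK, pow_add]
        field_simp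
      have hstep3 : (a K * ((m:ℝ)+1)) / t ^ 3 ≤ (a K * ((m:ℝ)+1)) / t ^ 2 :=
        div_le_div_of_nonneg_left (mul_nonneg (ha K) (by positivity))
          (by positivity) (pow_le_pow_right₀ ht.le (by norm_num))
      have hstep4 : (a K * ((m:ℝ)+1)) / t ^ 2 = (a K * ((m:ℝ)+1)) * t ^ (-2:ℝ) := by
        rw [Real.rpow_neg ht0.le, show ((2:ℝ)) = ((2:ℕ):ℝ) by norm_num,
          Real.rpow_natCast]
        rw [div_eq_mul_inv]
      linarith
  -- the approximating sequence
  set Fn : ℕ → ℝ → ℝ := fun n t => (a 0 - F (φ (n + K)) t) * (((m:ℝ)+1) * t ^ m) with hFn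
  have hKle : ∀ n : ℕ, K ≤ φ (n + K) :=
    fun n => le_trans (Nat.le_add_left K n) (hφ.le_apply)
  have hFn_meas : ∀ n, AEStronglyMeasurable (Fn n) (volume.restrict (Set.Ioi (0:ℝ))) := by
    intro n
    exact ((measurable_const.sub (hFmeas (φ (n + K)))).mul
      ((measurable_id'.pow_const m).const_mul _)).aestronglyMeasurable.restrict
  have hFn_bound : ∀ n, ∀ᵐ t ∂(volume.restrict (Set.Ioi (0:ℝ))), ‖Fn n t‖ ≤ bound t := by
    intro n
    rw [ae_restrict_iff' measurableSet_Ioi]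
    refine Filter.Eventually.of_forall fun t ht => ?_
    refine hpt (F (φ (n + K))) (hFnn _) (hFle _) ?_ t ht
    intro r hr
    exact htail (φ (n + K)) K (hKle n) r hr
  have hFn_lim : ∀ᵐ t ∂(volume.restrict (Set.Ioi (0:ℝ))),
      Tendsto (fun n => Fn n t) atTop (𝓝 ((a 0 - SF t) * (((m:ℝ)+1) * t ^ m))) := by
    refine ae_restrict_of_ae ?_
    filter_upwards [hae] with t htt
    have h1 : Tendsto (fun n => F (φ (n + K)) t) atTop (𝓝 (SF t)) :=
      htt.comp (tendsto_add_atTop_nat K)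
    exact (tendsto_const_nhds.sub h1).mul_const _
  have hDCT := MeasureTheory.tendsto_integral_of_dominated_convergence bound hFn_meas
    hbound_int hFn_bound hFn_lim
  have hconst : ∀ n : ℕ, (∫ t in Set.Ioi (0:ℝ), Fn n t) = a (m+1) := by
    intro n
    exact hFint (φ (n + K)) m (le_trans (by rw [hK]; omega) (hKle n))
  have h2 : Tendsto (fun n => ∫ t in Set.Ioi (0:ℝ), Fn n t) atTop (𝓝 (a (m+1))) := by
    rw [show (fun n => ∫ t in Set.Ioi (0:ℝ), Fn n t) = fun _ => a (m+1) from funext hconst]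
    exact tendsto_const_nhds
  have hval : (∫ t in Set.Ioi (0:ℝ), (a 0 - SF t) * (((m:ℝ)+1) * t ^ m)) = a (m+1) :=
    tendsto_nhds_unique hDCT h2
  refine ⟨?_, hval⟩
  refine Integrable.mono' hbound_int ?_ ?_
  · exact ((measurable_const.sub (SF.mono.measurable)).mul
      ((measurable_id'.pow_const m).const_mul _)).aestronglyMeasurable.restrict
  · rw [ae_restrict_iff' measurableSet_Ioi]
    refine Filter.Eventually.of_forall fun t ht => ?_
    exact hpt SF hSFnn hSFle (fun r hr => hSFtail K (by rw [hK]; omega) r hr) t ht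

end DCT
section Final

open MeasureTheory Finset Set Filter Topology

theorem stieltjes_existence (a : ℕ → ℝ)
    (hq0 : ∀ (n : ℕ) (c : ℕ → ℝ),
      0 ≤ ∑ k ∈ Finset.range (n + 1), ∑ l ∈ Finset.range (n + 1), a (k + l) * c k * c l)
    (hq1 : ∀ (n : ℕ) (c : ℕ → ℝ),
      0 ≤ ∑ k ∈ Finset.range (n + 1), ∑ l ∈ Finset.range (n + 1), a (k + l + 1) * c k * c l) :
    ∃ ν : Measure ℝ≥0, IsRepMeasure ν a := by
  classical
  have ha : ∀ n, 0 ≤ a n := a_nonneg hq0 hq1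
  -- quadrature data
  choose d x w hx hw hmom using fun j => quadrature a j hq0 hq1
  set F : ℕ → ℝ → ℝ := fun j => cdfF (x j) (w j) with hF
  have hsum0 : ∀ j, (∑ i, w j i) = a 0 := by
    intro j
    have := hmom j 0 (Nat.zero_le j)
    simpa using this
  have hmono : ∀ j, Monotone (F j) := fun j => cdfF_mono _ _ (hw j)
  have hFnn : ∀ j r, 0 ≤ F j r := fun j r => cdfF_nonneg _ _ (hw j) r
  have hFle : ∀ j r, F j r ≤ a 0 := fun j r => by
    rw [← hsum0 j]; exact cdfF_le _ _ (hw j) r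
  have hFneg : ∀ j (r:ℝ), r < 0 → F j r = 0 := fun j r hr => cdfF_neg _ _ (hx j) hr
  have htail : ∀ j k, k ≤ j → ∀ r : ℝ, 0 < r → a 0 - F j r ≤ a k / r ^ k := by
    intro j k hkj r hr
    have := cdfF_tail_le (x j) (w j) (hx j) (hw j) hr k
    rw [hsum0 j, hmom j k hkj] at this
    exact this
  have hFmeas : ∀ j, Measurable (F j) := fun j => (hmono j).measurable
  have hFint : ∀ (j m : ℕ), m + 1 ≤ j →
      (∫ t in Set.Ioi (0:ℝ), (a 0 - F j t) * (((m:ℝ)+1) * t ^ m)) = a (m+1) := by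
    intro j m hjm
    have := cdfF_integral (x j) (w j) (hx j) (a 0) (hsum0 j) m
    rw [hmom j (m+1) hjm] at this
    exact this
  -- limit cdf
  obtain ⟨SF, φ, hφ, hSFnn, hSFle, hSFneg, hSFtail, hbot, htop, hae⟩ :=
    exists_limit_cdf a ha F hmono hFnn hFle hFneg htail
  have hkey := fun m => limit_moment a ha F φ hφ SF hSFnn hSFle hSFtail hae
    hFnn hFle htail hFmeas hFint m
  set ν : Measure ℝ := SF.measure with hν
  haveI hfin : IsFiniteMeasure ν := by
    constructor
    rw [hν, SF.measure_univ hbot htop]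
    exact ENNReal.ofReal_lt_top
  have huniv : ν Set.univ = ENNReal.ofReal (a 0) := by
    rw [hν, SF.measure_univ hbot htop, sub_zero]
  have hIoi : ∀ r : ℝ, ν (Set.Ioi r) = ENNReal.ofReal (a 0 - SF r) := by
    intro r
    have h1 : ν (Set.Iic r) = ENNReal.ofReal (SF r) := by
      rw [hν, SF.measure_Iic hbot, sub_zero]
    rw [← Set.compl_Iic, measure_compl measurableSet_Iic (measure_ne_top ν _), huniv, h1,
      ← ENNReal.ofReal_sub _ (hSFnn r)]
  -- layer cake
  have hlay : ∀ m : ℕ, (∫⁻ ω, ENNReal.ofReal ((max ω 0) ^ (m+1)) ∂ν)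
      = ENNReal.ofReal (a (m+1)) := by
    intro m
    have hprim : ∀ X : ℝ, (∫ t in (0:ℝ)..X, ((m:ℝ)+1) * t ^ m) = X ^ (m+1) := by
      intro X
      rw [intervalIntegral.integral_const_mul, integral_pow, zero_pow (Nat.succ_ne_zero m)]
      push_cast
      field_simp
      simp
    have hlc := MeasureTheory.lintegral_comp_eq_lintegral_meas_lt_mul ν
      (f := fun ω => max ω 0) (g := fun t => ((m:ℝ)+1) * t ^ m)
      (Filter.Eventually.of_forall fun ω => le_max_right _ _)
      ((measurable_id.max measurable_const).aemeasurable)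
      (fun t _ => (intervalIntegral.intervalIntegrable_pow m).const_mul _)
      ((ae_restrict_iff' measurableSet_Ioi).mpr (Filter.Eventually.of_forall fun t ht => by
        rw [Set.mem_Ioi] at ht
        positivity))
    have hlhs : (∫⁻ ω, ENNReal.ofReal (∫ t in (0:ℝ)..(max ω 0), ((m:ℝ)+1) * t ^ m) ∂ν)
        = ∫⁻ ω, ENNReal.ofReal ((max ω 0) ^ (m+1)) ∂ν := by
      refine lintegral_congr fun ω => ?_
      rw [hprim]
    have hrhs : (∫⁻ t in Set.Ioi (0:ℝ), ν {a : ℝ | t < max a 0}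
          * ENNReal.ofReal (((m:ℝ)+1) * t ^ m))
        = ∫⁻ t in Set.Ioi (0:ℝ),
            ENNReal.ofReal ((a 0 - SF t) * (((m:ℝ)+1) * t ^ m)) := by
      refine setLIntegral_congr_fun measurableSet_Ioi ?_
      intro t ht
      rw [Set.mem_Ioi] at ht
      have hset : {a : ℝ | t < max a 0} = Set.Ioi t := by
        ext ω
        simp only [Set.mem_setOf_eq, Set.mem_Ioi, lt_max_iff]
        exact or_iff_left (not_lt.mpr ht.le)
      dsimp only
      rw [hset, hIoi t, ← ENNReal.ofReal_mul (by linarith [hSFle t])]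
    have hfin_int := (hkey m).1
    have hofReal : ENNReal.ofReal (∫ t in Set.Ioi (0:ℝ), (a 0 - SF t) * (((m:ℝ)+1) * t ^ m))
        = ∫⁻ t in Set.Ioi (0:ℝ), ENNReal.ofReal ((a 0 - SF t) * (((m:ℝ)+1) * t ^ m)) := by
      refine MeasureTheory.ofReal_integral_eq_lintegral_ofReal hfin_int ?_
      refine (ae_restrict_iff' measurableSet_Ioi).mpr (Filter.Eventually.of_forall
        fun t ht => ?_)
      rw [Set.mem_Ioi] at ht
      show (0:ℝ) ≤ (a 0 - SF t) * (((m:ℝ)+1) * t ^ m)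
      have := hSFle t
      exact mul_nonneg (by linarith) (by positivity)
    rw [← hlhs, hlc, hrhs, ← hofReal, (hkey m).2]
  -- transfer to ℝ≥0
  refine ⟨Measure.map Real.toNNReal ν, ?_⟩
  have hmapm : Measurable Real.toNNReal := measurable_real_toNNReal
  have hmap_univ : (Measure.map Real.toNNReal ν) Set.univ = ENNReal.ofReal (a 0) := by
    rw [Measure.map_apply hmapm MeasurableSet.univ, Set.preimage_univ, huniv]
  intro n
  rcases n with _ | m
  · -- n = 0
    haveI : IsFiniteMeasure (Measure.map Real.toNNReal ν) := by
      constructor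
      rw [hmap_univ]
      exact ENNReal.ofReal_lt_top
    constructor
    · simpa using (integrable_const (1:ℝ)
        (μ := Measure.map Real.toNNReal ν))
    · simp only [pow_zero]
      rw [MeasureTheory.integral_const, smul_eq_mul, mul_one, measureReal_def, hmap_univ,
        ENNReal.toReal_ofReal (ha 0)]
  · -- n = m + 1
    have hg_cont : Continuous (fun s : ℝ≥0 => (s:ℝ) ^ (m+1)) :=
      (continuous_pow (m+1)).comp NNReal.continuous_coe
    have hcomp : (fun s : ℝ≥0 => (s:ℝ) ^ (m+1)) ∘ Real.toNNReal
        = fun ω : ℝ => (max ω 0) ^ (m+1) := by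
      funext ω
      simp [Function.comp, Real.coe_toNNReal']
    have hν_int : Integrable (fun ω : ℝ => (max ω 0) ^ (m+1)) ν := by
      constructor
      · exact ((continuous_id'.max continuous_const).pow (m+1)).aestronglyMeasurable
      · rw [MeasureTheory.hasFiniteIntegral_iff_ofReal
          (Filter.Eventually.of_forall fun ω => by positivity)]
        rw [hlay m]
        exact ENNReal.ofReal_lt_top
    constructor
    · rw [MeasureTheory.integrable_map_measure hg_cont.aestronglyMeasurable
        hmapm.aemeasurable, hcomp]
      exact hν_int
    · rw [MeasureTheory.integral_map hmapm.aemeasurable hg_cont.aestronglyMeasurable]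
      have : (∫ ω, ((Real.toNNReal ω : ℝ) ^ (m+1)) ∂ν)
          = ∫ ω, (max ω 0) ^ (m+1) ∂ν := by
        refine integral_congr_ae (Filter.Eventually.of_forall fun ω => ?_)
        simp [Real.coe_toNNReal']
      rw [this]
      rw [MeasureTheory.integral_eq_lintegral_of_nonneg_ae (f := fun ω => (max ω 0) ^ (m+1))
        (Filter.Eventually.of_forall fun ω => by positivity)
        ((continuous_id'.max continuous_const).pow (m+1)).aestronglyMeasurable]
      rw [hlay m, ENNReal.toReal_ofReal (ha (m+1))]

end Final
/-- backward extendibility of a Stieltjes moment sequence: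
equivalence of (i) Stieltjes, (ii) positive definiteness, (iii) existence of a
representing measure `μ` of `t` with `∫ (1/s) dμ ≤ ϑ` (convention `1/0 = ∞`). -/
theorem stmt0 (t : ℕ → ℝ) (ht : IsStieltjesMoment t) (ϑ : ℝ) (hϑ : 0 < ϑ) :
    List.TFAE [IsStieltjesMoment (shiftedSeq ϑ t),
      IsPosDefSeq (shiftedSeq ϑ t),
      ∃ μ : Measure ℝ≥0, IsRepMeasure μ t ∧ (∫⁻ s, ((s : ℝ≥0∞))⁻¹ ∂μ) ≤ ENNReal.ofReal ϑ] := by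
  tfae_have 1 → 2 := fun h => stieltjes_posdef h
  tfae_have 2 → 1 := by
    intro h
    obtain ⟨μ, hμ⟩ := ht
    refine stieltjes_existence (shiftedSeq ϑ t) (IsPosDefSeqReal_of h) ?_
    intro n c
    exact rep_form_nonneg hμ 0 n c
  tfae_have 1 → 3 := fun h => shifted_to_bound h
  tfae_have 3 → 1 := fun h => bound_to_shifted hϑ h
  tfae_finish

end
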